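/- If G is a group (or profinite group) such that every open subgroup of G has a permutable complement, then for every open normal subgroup N of G, the quotient G/N is a C-group. -/

import Mathlib

open Pointwise

/-- If every open subgroup of a profinite group `G` has a permutable complement, then
`G/N` is a C-group for every open normal subgroup `N` of `G`. -/
theorem stmt8 {G : Type*} [Group G] [TopologicalSpace G] [IsTopologicalGroup G]
    [CompactSpace G] [T2Space G] [TotallyDisconnectedSpace G]
    (h : ∀ H : Subgroup G, IsOpen (H : Set G) → ∃ K : Subgroup G,
      (H : Set G) * (K : Set G) = Set.univ ∧ H ⊓ K = ⊥) :
    ∀ (N : Subgroup G) [N.Normal], IsOpen (N : Set G) →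
      ∀ H : Subgroup (G ⧸ N), ∃ K : Subgroup (G ⧸ N),
        (H : Set (G ⧸ N)) * (K : Set (G ⧸ N)) = Set.univ ∧ H ⊓ K = ⊥ := by
  intro N _ hN H
  set H' : Subgroup G := H.comap (QuotientGroup.mk' N) with hH'
  have hNle : N ≤ H' := by
    intro n hn
    simp [hH', Subgroup.mem_comap, QuotientGroup.mk'_apply,
      (QuotientGroup.eq_one_iff n).2 hn, H.one_mem]
  have hH'open : IsOpen (H' : Set G) := Subgroup.isOpen_mono hNle hN
  obtain ⟨K, hprod, hinf⟩ := h H' hH'open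
  refine ⟨K.map (QuotientGroup.mk' N), ?_, ?_⟩
  · ext x
    simp only [Set.mem_univ, iff_true]
    obtain ⟨g, rfl⟩ := QuotientGroup.mk'_surjective N x
    have : (g : G) ∈ (H' : Set G) * (K : Set G) := hprod ▸ Set.mem_univ g
    obtain ⟨a, ha, b, hb, rfl⟩ := this
    exact ⟨QuotientGroup.mk' N a, ha, QuotientGroup.mk' N b,
      Subgroup.mem_map_of_mem _ hb, (map_mul _ _ _).symm⟩
  · ext x
    simp only [Subgroup.mem_inf, Subgroup.mem_bot, Subgroup.mem_map]
    constructor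
    · rintro ⟨hxH, k, hk, rfl⟩
      have : k ∈ H' := hxH
      have : k ∈ H' ⊓ K := ⟨this, hk⟩
      rw [hinf, Subgroup.mem_bot] at this
      simp [this]
    · rintro rfl
      exact ⟨H.one_mem, 1, K.one_mem, map_one _⟩
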